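/- Let H and K be complex inner product spaces with dim(H) ≥ 2, and let T : H → K be a real-linear isometry preserving orthogonality. For a norm-one vector z ∈ H write T(i z) = i s(z) T(z) + η(z), where i s(z) = ⟪T(i z), T(z)⟫ with s(z) ∈ ℝ and ⟪η(z), T(z)⟫ = 0. Suppose x₀ ∈ H is norm-one and of mixed complex type for T, i.e., η(x₀) ≠ 0. Then every norm-one element x₁ ∈ H with ⟪x₁, x₀⟫ = 0 is of mixed complex type for T (η(x₁) ≠ 0); moreover s(x₀) = s(x₁), ‖η(x₀)‖ = ‖η(x₁)‖ ≠ 0, and each of T(x₀), η(x₀) is orthogonal to each of T(x₁), η(x₁) in K. -/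

import Mathlib

open scoped ComplexInnerProductSpace

/-- If a real-linear isometry `T` preserving orthogonality has a norm-one point `x₀`
of mixed complex type (`η(x₀) ≠ 0` in the decomposition
`T(i x₀) = i s(x₀) T(x₀) + η(x₀)`), then every norm-one `x₁ ⊥ x₀` is also of mixed
complex type, with `s(x₀) = s(x₁)`, `‖η(x₀)‖ = ‖η(x₁)‖ ≠ 0`, and
`{T(x₀), η(x₀)} ⊥ {T(x₁), η(x₁)}`. -/
theorem mixed_complex_type_of_orthogonal
    {H K : Type*} [NormedAddCommGroup H] [InnerProductSpace ℂ H]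
    [NormedAddCommGroup K] [InnerProductSpace ℂ K]
    (hdim : 2 ≤ Module.rank ℂ H)
    (T : H → K)
    (hadd : ∀ x y, T (x + y) = T x + T y)
    (hsmul : ∀ (r : ℝ) (x : H), T (r • x) = r • T x)
    (hiso : ∀ x, ‖T x‖ = ‖x‖)
    (hop : ∀ x y : H, ⟪x, y⟫ = 0 → ⟪T x, T y⟫ = 0)
    (x₀ x₁ : H) (hx₀ : ‖x₀‖ = 1) (hx₁ : ‖x₁‖ = 1) (horth : ⟪x₁, x₀⟫ = 0)
    (s₀ s₁ : ℝ) (η₀ η₁ : K)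
    (hs₀ : ⟪T (Complex.I • x₀), T x₀⟫ = Complex.I * (s₀ : ℂ))
    (hη₀ : ⟪η₀, T x₀⟫ = 0)
    (hdec₀ : T (Complex.I • x₀) = (Complex.I * (s₀ : ℂ)) • T x₀ + η₀)
    (hs₁ : ⟪T (Complex.I • x₁), T x₁⟫ = Complex.I * (s₁ : ℂ))
    (hη₁ : ⟪η₁, T x₁⟫ = 0)
    (hdec₁ : T (Complex.I • x₁) = (Complex.I * (s₁ : ℂ)) • T x₁ + η₁)
    (hmixed : η₀ ≠ 0) :
    η₁ ≠ 0 ∧ s₀ = s₁ ∧ ‖η₀‖ = ‖η₁‖ ∧ ‖η₀‖ ≠ 0 ∧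
      ⟪T x₀, T x₁⟫ = 0 ∧ ⟪T x₀, η₁⟫ = 0 ∧ ⟪η₀, T x₁⟫ = 0 ∧ ⟪η₀, η₁⟫ = 0 := by
  have hx01 : (⟪x₀, x₁⟫ : ℂ) = 0 := inner_eq_zero_symm.mp horth
  have hT01 : ⟪T x₀, T x₁⟫ = 0 := hop _ _ hx01
  have hT10 : ⟪T x₁, T x₀⟫ = 0 := hop _ _ horth
  have hTi0_1 : ⟪T (Complex.I • x₀), T x₁⟫ = 0 :=
    hop _ _ (by simp [inner_smul_left, hx01])
  have hT0_i1 : ⟪T x₀, T (Complex.I • x₁)⟫ = 0 :=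
    hop _ _ (by simp [inner_smul_right, hx01])
  have hTi1_0 : ⟪T (Complex.I • x₁), T x₀⟫ = 0 :=
    hop _ _ (by simp [inner_smul_left, horth])
  have hTi0_i1 : ⟪T (Complex.I • x₀), T (Complex.I • x₁)⟫ = 0 :=
    hop _ _ (by simp [inner_smul_left, inner_smul_right, hx01])
  have hsub : ∀ x y : H, T (x - y) = T x - T y := by
    intro x y
    have h := hadd y (x - y)
    rw [add_sub_cancel] at h
    rw [h]; abel
  -- key orthogonality to get s₀ = s₁
  have hkey : ⟪T (Complex.I • x₀ + Complex.I • x₁), T (x₀ - x₁)⟫ = 0 := by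
    apply hop
    have h00 : (⟪x₀, x₀⟫ : ℂ) = 1 := by
      simp [inner_self_eq_norm_sq_to_K, hx₀]
    have h11 : (⟪x₁, x₁⟫ : ℂ) = 1 := by
      simp [inner_self_eq_norm_sq_to_K, hx₁]
    simp [inner_add_left, inner_sub_right, inner_smul_left, horth, hx01, h00, h11, hx₀, hx₁]
  rw [hadd, hsub, inner_add_left, inner_sub_right, inner_sub_right, hs₀, hs₁,
    hTi0_1, hTi1_0] at hkey
  have hs : s₀ = s₁ := by
    have : (Complex.I : ℂ) * (s₀ - s₁) = 0 := by ring_nf; ring_nf at hkey; linear_combination hkey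
    have h2 : ((s₀ : ℂ) - s₁) = 0 := by
      rcases mul_eq_zero.mp this with h | h
      · exact absurd h Complex.I_ne_zero
      · exact h
    have := sub_eq_zero.mp h2
    exact_mod_cast this
  -- norm identities: s² + ‖η‖² = 1
  have hnorm : ∀ (x : H) (s : ℝ) (η : K), ‖x‖ = 1 → ⟪η, T x⟫ = 0 →
      T (Complex.I • x) = (Complex.I * (s : ℂ)) • T x + η → s ^ 2 + ‖η‖ ^ 2 = 1 := by
    intro x s η hx hη hdec
    have h1 : ‖T (Complex.I • x)‖ = 1 := by
      rw [hiso, norm_smul]; simp [hx]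
    have hcross : ⟪(Complex.I * (s : ℂ)) • T x, η⟫ = 0 := by
      rw [inner_smul_left]
      have : (⟪T x, η⟫ : ℂ) = 0 := (inner_eq_zero_symm (𝕜 := ℂ)).mp hη
      simp [this]
    have hTx : ‖T x‖ = 1 := by rw [hiso, hx]
    have hpyth := norm_add_sq (𝕜 := ℂ) ((Complex.I * (s : ℂ)) • T x) η
    rw [← hdec, hcross] at hpyth
    rw [norm_smul, hTx] at hpyth
    simp only [map_zero, mul_one, h1, one_pow] at hpyth
    have habs : ‖Complex.I * (s : ℂ)‖ = |s| := by
      simp [norm_mul]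
    rw [habs] at hpyth
    rw [sq_abs] at hpyth
    linarith [hpyth]
  have hn0 := hnorm x₀ s₀ η₀ hx₀ hη₀ hdec₀
  have hn1 := hnorm x₁ s₁ η₁ hx₁ hη₁ hdec₁
  have hηeq : ‖η₀‖ = ‖η₁‖ := by
    have h2 : ‖η₀‖ ^ 2 = ‖η₁‖ ^ 2 := by rw [hs] at hn0; linarith
    nlinarith [norm_nonneg η₀, norm_nonneg η₁]
  have hη₀ne : ‖η₀‖ ≠ 0 := norm_ne_zero_iff.mpr hmixed
  have hη₁ne : η₁ ≠ 0 := by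
    rw [← norm_ne_zero_iff, ← hηeq]; exact hη₀ne
  have hη₁eq : η₁ = T (Complex.I • x₁) - (Complex.I * (s₁ : ℂ)) • T x₁ := by
    rw [hdec₁]; abel
  have hη₀eq : η₀ = T (Complex.I • x₀) - (Complex.I * (s₀ : ℂ)) • T x₀ := by
    rw [hdec₀]; abel
  refine ⟨hη₁ne, hs, hηeq, hη₀ne, hT01, ?_, ?_, ?_⟩
  · rw [hη₁eq]
    simp [inner_sub_right, inner_smul_right, hT0_i1, hT01]
  · rw [hη₀eq]
    simp [inner_sub_left, inner_smul_left, hTi0_1, hT01]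
  · rw [hη₀eq, hη₁eq]
    simp [inner_sub_left, inner_sub_right, inner_smul_left, inner_smul_right,
      hTi0_i1, hTi0_1, hT0_i1, hT01]
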